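/- Let T₁,...,T_N be i.i.d. shifted exponential variables with rate λ_s > 0, shift c ≥ 0, let T_n be one of them, let T_N(K) be the K-th order statistic, and let T_D > c. Then P(T_n > min{T_D, T_N(K)}) = e^{-λ_s(T_D-c)} + (N-K)/N - (1/N)·Σ_{h=K+1}^N Z_h, where Z_h = P(T_D < T_N(h)). -/

import Mathlib

open MeasureTheory ProbabilityTheory Real

/-- The shifted exponential distribution with rate `l` and shift `c`:
density `l * exp (-l*(t-c))` for `t > c`, `0` otherwise. -/
noncomputable def shiftedExp (l c : ℝ) : MeasureTheory.Measure ℝ :=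
  MeasureTheory.volume.withDensity
    (fun t => ENNReal.ofReal (if c < t then l * Real.exp (-l * (t - c)) else 0))

/-- The `K`-th order statistic (K-th smallest value) of the family `T` evaluated at `ω`. -/
noncomputable def orderStat {Ω : Type*} {N : ℕ} (T : Fin N → Ω → ℝ) (K : ℕ) (ω : Ω) : ℝ :=
  sInf {x : ℝ | K ≤ Nat.card {i : Fin N // T i ω ≤ x}}

open Set Finset
open scoped Classical ENNReal

/-! ### Section A : basic facts about `shiftedExp` -/

lemma shiftedExp_eq (l c : ℝ) :
    shiftedExp l c = MeasureTheory.volume.withDensity (fun t => exponentialPDF l (t - c)) := by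
  refine withDensity_congr_ae ?_
  have h : ∀ t : ℝ, t ≠ c →
      ENNReal.ofReal (if c < t then l * Real.exp (-l * (t - c)) else 0)
        = exponentialPDF l (t - c) := by
    intro t ht
    rw [exponentialPDF_eq]
    rcases lt_or_gt_of_ne ht with h | h
    · rw [if_neg (not_lt.2 h.le), if_neg (by linarith)]
    · rw [if_pos h, if_pos (by linarith)]
      ring_nf
  filter_upwards [compl_mem_ae_iff.2 (volume_singleton (a := c))] with t ht
  exact h t ht

lemma shiftedExp_apply (l c : ℝ) {s : Set ℝ} (hs : MeasurableSet s) :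
    shiftedExp l c s = ∫⁻ t in s, exponentialPDF l (t - c) := by
  rw [shiftedExp_eq, withDensity_apply _ hs]

lemma shiftedExp_prob (l c : ℝ) (hl : 0 < l) : IsProbabilityMeasure (shiftedExp l c) := by
  constructor
  rw [shiftedExp_apply _ _ MeasurableSet.univ, Measure.restrict_univ]
  have : ∫⁻ t : ℝ, exponentialPDF l (t - c) = ∫⁻ t : ℝ, exponentialPDF l t :=
    (measurePreserving_sub_right volume c).lintegral_comp
      (measurable_exponentialPDFReal l).ennreal_ofReal
  rw [this, lintegral_exponentialPDF_eq_one hl]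

instance shiftedExp_noAtoms (l c : ℝ) : NullSingletonClass (shiftedExp l c) := by
  constructor
  intro x
  rw [shiftedExp_apply _ _ (measurableSet_singleton x)]
  rw [setLIntegral_measure_zero _ _ (volume_singleton)]

lemma shiftedExp_Ioi (l c x : ℝ) (hl : 0 < l) (hx : c ≤ x) :
    shiftedExp l c (Set.Ioi x) = ENNReal.ofReal (Real.exp (-l * (x - c))) := by
  have key : ∫⁻ t in Set.Iic x, exponentialPDF l (t - c)
      = ENNReal.ofReal (1 - Real.exp (-(l * (x - c)))) := by
    have h0 := lintegral_exponentialPDF_eq_antiDeriv (r := l) hl (x - c)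
    rw [if_pos (by linarith)] at h0
    rw [← h0]
    have : ∫⁻ t in Set.Iic x, exponentialPDF l (t - c)
        = ∫⁻ u in Set.Iic (x - c), exponentialPDF l u := by
      have hpre : (fun t : ℝ => t - c) ⁻¹' (Set.Iic (x - c)) = Set.Iic x := by
        ext t; simp [sub_le_sub_iff_right]
      rw [← hpre]
      exact (measurePreserving_sub_right volume c).setLIntegral_comp_preimage_emb
        (MeasurableEquiv.subRight c).measurableEmbedding _ _
    rw [this]
  have total : shiftedExp l c (Set.Iic x) + shiftedExp l c (Set.Ioi x) = 1 := by
    rw [← measure_union (Set.Iic_disjoint_Ioi le_rfl) measurableSet_Ioi, Set.Iic_union_Ioi]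
    exact (shiftedExp_prob l c hl).measure_univ
  have h1 : shiftedExp l c (Set.Iic x) = ENNReal.ofReal (1 - Real.exp (-(l * (x - c)))) := by
    rw [shiftedExp_apply _ _ measurableSet_Iic, key]
  rw [h1] at total
  have : ENNReal.ofReal (1 - Real.exp (-(l * (x - c))))
      + ENNReal.ofReal (Real.exp (-l * (x - c))) = 1 := by
    rw [← ENNReal.ofReal_add ?h1 (Real.exp_nonneg _),
      show -l * (x - c) = -(l * (x-c)) by ring]
    · norm_num
    · have hexp : Real.exp (-(l * (x - c))) ≤ 1 := Real.exp_le_one_iff.2 (by nlinarith)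
      linarith
  rw [← this] at total
  exact ((ENNReal.add_right_inj ENNReal.ofReal_ne_top).1 total)

/-! ### Section C : order statistics via min over K-subsets of max -/

variable {N : ℕ}

noncomputable def gmax (v : Fin N → ℝ) (s : Finset (Fin N)) : ℝ :=
  if h : s.Nonempty then s.sup' h v else 0

noncomputable def osv (K : ℕ) (v : Fin N → ℝ) : ℝ :=
  if h : (Finset.powersetCard K (Finset.univ : Finset (Fin N))).Nonempty
  then (Finset.powersetCard K (Finset.univ : Finset (Fin N))).inf' h (gmax v)
  else 0

lemma exists_subset_iff_card (v : Fin N → ℝ) (K : ℕ) (p : ℝ → Prop) :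
    (∃ s : Finset (Fin N), s.card = K ∧ ∀ i ∈ s, p (v i))
      ↔ K ≤ (Finset.univ.filter (fun i => p (v i))).card := by
  constructor
  · rintro ⟨s, hcard, hs⟩
    have : s ⊆ Finset.univ.filter (fun i => p (v i)) := by
      intro i hi; simp [Finset.mem_filter, hs i hi]
    simpa [hcard] using Finset.card_le_card this
  · intro h
    obtain ⟨s, hsub, hcard⟩ := Finset.exists_subset_card_eq h
    exact ⟨s, hcard, fun i hi => (Finset.mem_filter.1 (hsub hi)).2⟩

lemma osv_le_iff {K : ℕ} (hK : 1 ≤ K) (hKN : K ≤ N) (v : Fin N → ℝ) (x : ℝ) :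
    osv K v ≤ x ↔ K ≤ (Finset.univ.filter (fun i => v i ≤ x)).card := by
  have hne : (Finset.powersetCard K (Finset.univ : Finset (Fin N))).Nonempty :=
    (Finset.powersetCard_nonempty).2 (by simpa using hKN)
  rw [osv, dif_pos hne, Finset.inf'_le_iff, ← exists_subset_iff_card v K (fun y => y ≤ x)]
  constructor
  · rintro ⟨s, hs, hle⟩
    have hcard : s.card = K := (Finset.mem_powersetCard.1 hs).2
    have hsne : s.Nonempty := Finset.card_pos.1 (hcard ▸ hK)
    rw [gmax, dif_pos hsne, Finset.sup'_le_iff] at hle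
    exact ⟨s, hcard, hle⟩
  · rintro ⟨s, hcard, hle⟩
    have hsne : s.Nonempty := Finset.card_pos.1 (hcard ▸ hK)
    refine ⟨s, Finset.mem_powersetCard.2 ⟨Finset.subset_univ s, hcard⟩, ?_⟩
    rw [gmax, dif_pos hsne, Finset.sup'_le_iff]
    exact hle

lemma osv_lt_iff {K : ℕ} (hK : 1 ≤ K) (hKN : K ≤ N) (v : Fin N → ℝ) (x : ℝ) :
    osv K v < x ↔ K ≤ (Finset.univ.filter (fun i => v i < x)).card := by
  have hne : (Finset.powersetCard K (Finset.univ : Finset (Fin N))).Nonempty :=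
    (Finset.powersetCard_nonempty).2 (by simpa using hKN)
  rw [osv, dif_pos hne, Finset.inf'_lt_iff, ← exists_subset_iff_card v K (fun y => y < x)]
  constructor
  · rintro ⟨s, hs, hle⟩
    have hcard : s.card = K := (Finset.mem_powersetCard.1 hs).2
    have hsne : s.Nonempty := Finset.card_pos.1 (hcard ▸ hK)
    rw [gmax, dif_pos hsne, Finset.sup'_lt_iff] at hle
    exact ⟨s, hcard, hle⟩
  · rintro ⟨s, hcard, hle⟩
    have hsne : s.Nonempty := Finset.card_pos.1 (hcard ▸ hK)
    refine ⟨s, Finset.mem_powersetCard.2 ⟨Finset.subset_univ s, hcard⟩, ?_⟩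
    rw [gmax, dif_pos hsne, Finset.sup'_lt_iff]
    exact hle

lemma natcard_eq (v : Fin N → ℝ) (x : ℝ) :
    Nat.card {i : Fin N // v i ≤ x} = (Finset.univ.filter (fun i => v i ≤ x)).card := by
  rw [Nat.card_eq_fintype_card, Fintype.card_subtype]

lemma orderStat_eq_osv {Ω : Type*} (T : Fin N → Ω → ℝ) {K : ℕ} (hK : 1 ≤ K) (hKN : K ≤ N)
    (ω : Ω) : orderStat T K ω = osv K (fun i => T i ω) := by
  have hset : {x : ℝ | K ≤ Nat.card {i : Fin N // T i ω ≤ x}}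
      = Set.Ici (osv K (fun i => T i ω)) := by
    ext x
    simp only [Set.mem_setOf_eq, Set.mem_Ici]
    rw [natcard_eq (fun i => T i ω) x, ← osv_le_iff hK hKN]
  rw [orderStat, hset, csInf_Ici]

/-! ### Section D/E : permutation invariance and a.s. injectivity -/

section Perm
variable (ν : Measure ℝ) [IsProbabilityMeasure ν]

lemma perm_invariant (σ : Equiv.Perm (Fin N)) {A : Set (Fin N → ℝ)} (hA : MeasurableSet A) :
    Measure.pi (fun _ : Fin N => ν) {v | (fun i => v (σ i)) ∈ A}
      = Measure.pi (fun _ : Fin N => ν) A := by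
  have h := MeasureTheory.measurePreserving_piCongrLeft (fun _ : Fin N => ν) σ.symm
  have he : ⇑(MeasurableEquiv.piCongrLeft (fun _ : Fin N => ℝ) σ.symm)
      = fun v : Fin N → ℝ => (fun i => v (σ i)) := by
    ext v i
    rw [MeasurableEquiv.coe_piCongrLeft]
    have hi : i = σ.symm (σ i) := (Equiv.symm_apply_apply σ i).symm
    conv_lhs => rw [hi, Equiv.piCongrLeft_apply_apply]
  have h2 := h.measure_preimage hA.nullMeasurableSet
  rw [he] at h2
  exact h2

lemma pair_eq_null [NullSingletonClass ν] {i j : Fin N} (hij : i ≠ j) :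
    Measure.pi (fun _ : Fin N => ν) {v | v i = v j} = 0 := by
  have h := MeasureTheory.measurePreserving_piEquivPiSubtypeProd
    (fun _ : Fin N => ν) (fun k => k = j)
  set e := MeasurableEquiv.piEquivPiSubtypeProd (fun _ : Fin N => ℝ) (fun k => k = j)
  set B : Set ((∀ k : {k : Fin N // k = j}, ℝ) × (∀ k : {k : Fin N // ¬ k = j}, ℝ)) :=
    {p | p.2 ⟨i, hij⟩ = p.1 ⟨j, rfl⟩}
  have hB : MeasurableSet B := by
    apply measurableSet_eq_fun
    · exact (measurable_pi_apply _).comp measurable_snd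
    · exact (measurable_pi_apply _).comp measurable_fst
  have hpre : e ⁻¹' B = {v | v i = v j} := by
    ext v
    simp [B, e, MeasurableEquiv.piEquivPiSubtypeProd, Equiv.piEquivPiSubtypeProd]
  rw [← hpre, h.measure_preimage hB.nullMeasurableSet]
  rw [Measure.prod_apply hB]
  have hz : ∀ a, (Measure.pi (fun _ : {k : Fin N // ¬ k = j} => ν))
      (Prod.mk a ⁻¹' B) = 0 := by
    intro a
    have : Prod.mk a ⁻¹' B
        = {b : ∀ k : {k : Fin N // ¬ k = j}, ℝ | b ⟨i, hij⟩ = a ⟨j, rfl⟩} := rfl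
    rw [this]
    exact Measure.pi_hyperplane _ _ _
  simp [hz]

lemma ae_injective [NullSingletonClass ν] :
    ∀ᵐ v ∂(Measure.pi (fun _ : Fin N => ν)), Function.Injective v := by
  have h : ∀ᵐ v ∂(Measure.pi (fun _ : Fin N => ν)), ∀ i j : Fin N, i ≠ j → v i ≠ v j := by
    rw [MeasureTheory.ae_all_iff]
    intro i
    rw [MeasureTheory.ae_all_iff]
    intro j
    by_cases hij : i = j
    · simp [hij]
    · refine MeasureTheory.ae_iff.2 ?_
      have hs : {v : Fin N → ℝ | ¬ (i ≠ j → v i ≠ v j)} ⊆ {v | v i = v j} := by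
        intro v hv
        simp only [Set.mem_setOf_eq] at hv ⊢
        push_neg at hv
        exact hv.2
      exact measure_mono_null hs (pair_eq_null ν hij)
  filter_upwards [h] with v hv
  intro i j hij
  by_contra hne
  exact hv i j hne hij

end Perm

/-! ### Section F : rank combinatorics -/

noncomputable def rnk (v : Fin N → ℝ) (m : Fin N) : ℕ :=
  (Finset.univ.filter (fun i => v i < v m)).card

lemma rnk_lt (v : Fin N → ℝ) (m : Fin N) : rnk v m < N ∨ N = 0 := by
  rcases Nat.eq_zero_or_pos N with h | h
  · exact Or.inr h
  · left
    have hss : (Finset.univ.filter (fun i => v i < v m)) ⊂ Finset.univ := by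
      refine Finset.ssubset_univ_iff.2 ?_
      intro h
      have := h ▸ Finset.mem_univ m
      simp at this
    simpa [Finset.card_univ, rnk] using Finset.card_lt_card hss

lemma rnk_strictMonoOn (v : Fin N → ℝ) {a b : Fin N} (hab : v a < v b) : rnk v a < rnk v b := by
  apply Finset.card_lt_card
  constructor
  · intro i hi
    simp only [Finset.mem_filter, Finset.mem_univ, true_and] at hi ⊢
    linarith
  · intro h
    have := h (Finset.mem_filter.2 ⟨Finset.mem_univ a, hab⟩)
    simp at this

lemma rnk_injective {v : Fin N → ℝ} (hv : Function.Injective v) : Function.Injective (rnk v) := by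
  intro a b hab
  by_contra h
  rcases lt_trichotomy (v a) (v b) with h1 | h1 | h1
  · exact absurd hab (Nat.ne_of_lt (rnk_strictMonoOn v h1))
  · exact h (hv h1)
  · exact absurd hab.symm (Nat.ne_of_lt (rnk_strictMonoOn v h1))

lemma rnk_image {v : Fin N → ℝ} (hv : Function.Injective v) :
    Finset.image (rnk v) Finset.univ = Finset.range N := by
  apply Finset.eq_of_subset_of_card_le
  · intro x hx
    simp only [Finset.mem_image] at hx
    obtain ⟨m, _, rfl⟩ := hx
    rcases rnk_lt v m with h | h
    · exact Finset.mem_range.2 h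
    · exact absurd m.2 (by omega)
  · rw [Finset.card_range, Finset.card_image_of_injective _ (rnk_injective hv),
      Finset.card_univ, Fintype.card_fin]

lemma card_rnk_pred {v : Fin N → ℝ} (hv : Function.Injective v) (q : ℕ → Prop)
    [DecidablePred q] :
    (Finset.univ.filter (fun m => q (rnk v m))).card = ((Finset.range N).filter q).card := by
  rw [← rnk_image hv, Finset.filter_image,
    Finset.card_image_of_injective _ (rnk_injective hv)]

lemma count_ge_rank {v : Fin N → ℝ} (hv : Function.Injective v) (K : ℕ) :
    (Finset.univ.filter (fun m => K ≤ rnk v m)).card = N - K := by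
  rw [card_rnk_pred hv (fun j => K ≤ j)]
  have h : (Finset.range N).filter (fun j => K ≤ j) = Finset.Ico K N := by
    ext j
    simp only [Finset.mem_filter, Finset.mem_range, Finset.mem_Ico]
    omega
  rw [h, Nat.card_Ico]

lemma td_lt_iff_rank {v : Fin N → ℝ} (TD : ℝ) (m : Fin N) :
    TD < v m ↔ (Finset.univ.filter (fun i => v i ≤ TD)).card ≤ rnk v m := by
  constructor
  · intro h
    apply Finset.card_le_card
    intro i hi
    simp only [Finset.mem_filter, Finset.mem_univ, true_and] at hi ⊢
    linarith
  · intro h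
    by_contra hc
    push_neg at hc
    have hsub : (Finset.univ.filter (fun i => v i < v m)) ⊆
        (Finset.univ.filter (fun i => v i ≤ TD)).erase m := by
      intro i hi
      simp only [Finset.mem_filter, Finset.mem_univ, true_and] at hi
      refine Finset.mem_erase.2 ⟨?_, ?_⟩
      · rintro rfl; exact absurd hi (lt_irrefl _)
      · simp only [Finset.mem_filter, Finset.mem_univ, true_and]; linarith
    have hm : m ∈ Finset.univ.filter (fun i => v i ≤ TD) := by
      simp only [Finset.mem_filter, Finset.mem_univ, true_and]; linarith
    have h2 := Finset.card_le_card hsub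
    rw [Finset.card_erase_of_mem hm] at h2
    have h3 : 1 ≤ (Finset.univ.filter (fun i => v i ≤ TD)).card := Finset.card_pos.2 ⟨m, hm⟩
    rw [rnk] at h
    omega

lemma countJ {v : Fin N → ℝ} (hv : Function.Injective v) (K : ℕ) (TD : ℝ) :
    (Finset.univ.filter (fun m => TD < v m ∧ K ≤ rnk v m)).card
      = N - max K ((Finset.univ.filter (fun i => v i ≤ TD)).card) := by
  rw [← count_ge_rank hv (max K ((Finset.univ.filter (fun i => v i ≤ TD)).card))]
  congr 1
  apply Finset.filter_congr
  intro m _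
  rw [td_lt_iff_rank TD m]
  constructor
  · rintro ⟨h1, h2⟩; exact max_le h2 h1
  · intro h; exact ⟨le_trans (le_max_right _ _) h, le_trans (le_max_left _ _) h⟩

lemma card_Icc_filter (K C M : ℕ) (hK : K ≤ M) (hC : C ≤ M) :
    ((Finset.Icc (K+1) M).filter (fun h => C < h)).card = M - max K C := by
  have h : (Finset.Icc (K+1) M).filter (fun h => C < h) = Finset.Icc (max K C + 1) M := by
    ext j
    simp only [Finset.mem_filter, Finset.mem_Icc]
    omega
  rw [h, Nat.card_Icc]
  omega

lemma rnk_comp (v : Fin N → ℝ) (σ : Equiv.Perm (Fin N)) (m : Fin N) :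
    rnk (fun i => v (σ i)) m = rnk v (σ m) := by
  rw [rnk, rnk]
  have h : (Finset.univ.filter (fun i => v (σ i) < v (σ m)))
      = Finset.image σ.symm (Finset.univ.filter (fun k => v k < v (σ m))) := by
    ext i
    simp only [Finset.mem_filter, Finset.mem_univ, true_and, Finset.mem_image]
    constructor
    · intro h; exact ⟨σ i, h, Equiv.symm_apply_apply σ i⟩
    · rintro ⟨k, hk, rfl⟩; simpa using hk
  rw [h, Finset.card_image_of_injective _ σ.symm.injective]

/-! ### Section G : counting integration -/

lemma sum_meas {X ι : Type*} [MeasurableSpace X] (μ : Measure X) (s : Finset ι)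
    (p : ι → X → Prop) [∀ m v, Decidable (p m v)]
    (hA : ∀ m ∈ s, MeasurableSet {v | p m v}) :
    ∑ m ∈ s, μ {v | p m v}
      = ∫⁻ v, ((s.filter (fun m => p m v)).card : ℝ≥0∞) ∂μ := by
  have h1 : ∀ m ∈ s, μ {v | p m v}
      = ∫⁻ v, ({v | p m v} : Set X).indicator (fun _ => (1:ℝ≥0∞)) v ∂μ := by
    intro m hm
    exact (lintegral_indicator_one (hA m hm)).symm
  rw [Finset.sum_congr rfl h1, ← lintegral_finset_sum]
  · apply lintegral_congr
    intro v
    simp only [Set.indicator_apply, Set.mem_setOf_eq]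
    rw [Finset.sum_boole]
  · intro m hm
    exact (measurable_one).indicator (hA m hm)

lemma meas_rnk (m : Fin N) : Measurable (fun v : Fin N → ℝ => rnk v m) := by
  have h : (fun v : Fin N → ℝ => rnk v m)
      = fun v => ∑ i : Fin N, if v i < v m then 1 else 0 := by
    ext v; rw [rnk, Finset.card_filter]
  rw [h]
  exact Finset.measurable_sum _ (fun i _ =>
    Measurable.ite (measurableSet_lt (measurable_pi_apply i) (measurable_pi_apply m))
      measurable_const measurable_const)

lemma meas_cle (TD : ℝ) :
    Measurable (fun v : Fin N → ℝ => (Finset.univ.filter (fun i => v i ≤ TD)).card) := by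
  have h : (fun v : Fin N → ℝ => (Finset.univ.filter (fun i => v i ≤ TD)).card)
      = fun v => ∑ i : Fin N, if v i ≤ TD then 1 else 0 := by
    ext v; rw [Finset.card_filter]
  rw [h]
  exact Finset.measurable_sum _ (fun i _ =>
    Measurable.ite (measurableSet_le (measurable_pi_apply i) measurable_const)
      measurable_const measurable_const)

theorem prob_fail_reception
    {Ω : Type*} [MeasurableSpace Ω] (P : MeasureTheory.Measure Ω) [IsProbabilityMeasure P]
    (N K : ℕ) (hK : 1 ≤ K) (hKN : K ≤ N)
    (l c TD : ℝ) (hl : 0 < l) (hc : 0 ≤ c) (hTD : c < TD)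
    (T : Fin N → Ω → ℝ) (hT : ∀ i, Measurable (T i)) (n : Fin N)
    (hlaw : MeasureTheory.Measure.map (fun ω i => T i ω) P
      = MeasureTheory.Measure.pi (fun _ : Fin N => shiftedExp l c)) :
    (P {ω | min TD (orderStat T K ω) < T n ω}).toReal
      = Real.exp (-l * (TD - c)) + ((N : ℝ) - K) / N
          - (1 / (N : ℝ)) * ∑ h ∈ Finset.Icc (K + 1) N, (P {ω | TD < orderStat T h ω}).toReal := by
  have hN : 0 < N := lt_of_lt_of_le hK hKN
  set ν := shiftedExp l c with hν
  haveI : IsProbabilityMeasure ν := shiftedExp_prob l c hl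
  set μ := Measure.pi (fun _ : Fin N => ν) with hμ
  haveI : IsProbabilityMeasure μ := by rw [hμ]; infer_instance
  set Φ : Ω → (Fin N → ℝ) := fun ω i => T i ω with hΦdef
  have hΦ : Measurable Φ := measurable_pi_lambda _ hT
  -- events
  set A : Set (Fin N → ℝ) := {v | TD < v n} with hAdef
  set B : Set (Fin N → ℝ) := {v | K ≤ rnk v n} with hBdef
  set E : ℕ → Set (Fin N → ℝ) :=
    fun h => {v | (Finset.univ.filter (fun i => v i ≤ TD)).card < h} with hEdef
  have hA : MeasurableSet A :=
    measurableSet_lt measurable_const (measurable_pi_apply n)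
  have hBm : ∀ m : Fin N, MeasurableSet {v : Fin N → ℝ | K ≤ rnk v m} := fun m =>
    (meas_rnk m) measurableSet_Ici
  have hB : MeasurableSet B := hBm n
  have hAm : ∀ m : Fin N, MeasurableSet {v : Fin N → ℝ | TD < v m} := fun m =>
    measurableSet_lt measurable_const (measurable_pi_apply m)
  have hE : ∀ h, MeasurableSet (E h) := fun h => (meas_cle TD) measurableSet_Iio
  -- transfer from P to μ
  have key : ∀ S : Set (Fin N → ℝ), MeasurableSet S → P (Φ ⁻¹' S) = μ S := by
    intro S hS
    rw [← Measure.map_apply hΦ hS, hΦdef]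
    rw [show (fun ω => fun i => T i ω) = (fun ω i => T i ω) from rfl, hlaw]
  -- event identifications
  have hev1 : {ω | min TD (orderStat T K ω) < T n ω} = Φ ⁻¹' (A ∪ B) := by
    ext ω
    have hos := orderStat_eq_osv T hK hKN ω
    simp only [Set.mem_setOf_eq, Set.mem_preimage, Set.mem_union, min_lt_iff, hos,
      hAdef, hBdef]
    constructor
    · rintro (h | h)
      · exact Or.inl h
      · exact Or.inr ((osv_lt_iff hK hKN (fun i => T i ω) (T n ω)).1 h)
    · rintro (h | h)
      · exact Or.inl h
      · exact Or.inr ((osv_lt_iff hK hKN (fun i => T i ω) (T n ω)).2 h)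
  have hev2 : ∀ h ∈ Finset.Icc (K+1) N, {ω | TD < orderStat T h ω} = Φ ⁻¹' (E h) := by
    intro h hh
    rw [Finset.mem_Icc] at hh
    have h1 : 1 ≤ h := by omega
    have h2 : h ≤ N := hh.2
    ext ω
    have hos := orderStat_eq_osv T h1 h2 ω
    simp only [Set.mem_setOf_eq, Set.mem_preimage, hos, hEdef]
    rw [← not_le, ← not_le, osv_le_iff h1 h2]
  -- μ A
  have hA_val : μ A = ENNReal.ofReal (Real.exp (-l * (TD - c))) := by
    have h1 : A = Function.eval n ⁻¹' (Set.Ioi TD) := rfl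
    rw [h1, ← Set.univ_pi_update_univ, hμ, Measure.pi_pi]
    have h2 : ∀ i : Fin N, ν (Function.update (fun _ : Fin N => Set.univ) n (Set.Ioi TD) i)
        = Function.update (fun _ : Fin N => (1:ℝ≥0∞)) n (ν (Set.Ioi TD)) i := by
      intro i
      rcases eq_or_ne i n with rfl | hi
      · simp
      · simp [Function.update_of_ne hi]
    rw [Finset.prod_congr rfl (fun i _ => h2 i), Finset.prod_update_of_mem (Finset.mem_univ n)]
    simp [hν, shiftedExp_Ioi l c TD hl hTD.le]
  -- symmetry : μ of shifted events
  have hBsym : ∀ m : Fin N, μ {v : Fin N → ℝ | K ≤ rnk v m} = μ B := by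
    intro m
    have hσ := perm_invariant ν (Equiv.swap n m) hB
    have hset : {v : Fin N → ℝ | (fun i => v ((Equiv.swap n m) i)) ∈ B}
        = {v : Fin N → ℝ | K ≤ rnk v m} := by
      ext v
      simp only [Set.mem_setOf_eq, hBdef, rnk_comp v (Equiv.swap n m) n,
        Equiv.swap_apply_left]
    rw [← hset, hμ]
    exact hσ
  have hJm : ∀ m : Fin N, MeasurableSet ({v : Fin N → ℝ | TD < v m} ∩ {v | K ≤ rnk v m}) :=
    fun m => (hAm m).inter (hBm m)
  have hJsym : ∀ m : Fin N,
      μ ({v : Fin N → ℝ | TD < v m} ∩ {v | K ≤ rnk v m}) = μ (A ∩ B) := by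
    intro m
    have hσ := perm_invariant ν (Equiv.swap n m) (hA.inter hB)
    have hset : {v : Fin N → ℝ | (fun i => v ((Equiv.swap n m) i)) ∈ A ∩ B}
        = {v : Fin N → ℝ | TD < v m} ∩ {v | K ≤ rnk v m} := by
      ext v
      simp only [Set.mem_setOf_eq, Set.mem_inter_iff, hAdef, hBdef,
        rnk_comp v (Equiv.swap n m) n, Equiv.swap_apply_left]
    rw [← hset, hμ]
    exact hσ
  have hinj : ∀ᵐ v ∂μ, Function.Injective v := by
    rw [hμ]; exact ae_injective ν
  -- N * μ B = N - K
  have hB_val : (N : ℝ≥0∞) * μ B = ((N - K : ℕ) : ℝ≥0∞) := by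
    have hsum : ∑ m : Fin N, μ {v : Fin N → ℝ | K ≤ rnk v m} = (N : ℝ≥0∞) * μ B := by
      rw [Finset.sum_congr rfl (fun m _ => hBsym m), Finset.sum_const, Finset.card_univ,
        Fintype.card_fin, nsmul_eq_mul]
    rw [← hsum, sum_meas μ Finset.univ (fun m v => K ≤ rnk v m) (fun m _ => hBm m)]
    have hae : (fun v : Fin N → ℝ =>
        ((Finset.univ.filter (fun m => K ≤ rnk v m)).card : ℝ≥0∞))
        =ᵐ[μ] (fun _ => ((N - K : ℕ) : ℝ≥0∞)) := by
      filter_upwards [hinj] with v hv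
      rw [count_ge_rank hv K]
    rw [lintegral_congr_ae hae, lintegral_const, measure_univ, mul_one]
  -- N * μ (A ∩ B) = ∑ μ (E h)
  have hJ_val : (N : ℝ≥0∞) * μ (A ∩ B) = ∑ h ∈ Finset.Icc (K+1) N, μ (E h) := by
    have hsum : ∑ m : Fin N, μ ({v : Fin N → ℝ | TD < v m} ∩ {v | K ≤ rnk v m})
        = (N : ℝ≥0∞) * μ (A ∩ B) := by
      rw [Finset.sum_congr rfl (fun m _ => hJsym m), Finset.sum_const, Finset.card_univ,
        Fintype.card_fin, nsmul_eq_mul]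
    have hJm' : ∀ m ∈ (Finset.univ : Finset (Fin N)),
        MeasurableSet {v : Fin N → ℝ | TD < v m ∧ K ≤ rnk v m} :=
      fun m _ => (hAm m).inter (hBm m)
    have hsum' : ∑ m : Fin N, μ {v : Fin N → ℝ | TD < v m ∧ K ≤ rnk v m}
        = (N : ℝ≥0∞) * μ (A ∩ B) := by
      rw [← hsum]
      exact Finset.sum_congr rfl (fun m _ => rfl)
    rw [← hsum', sum_meas μ Finset.univ (fun m v => TD < v m ∧ K ≤ rnk v m) hJm',
      sum_meas μ (Finset.Icc (K+1) N)
        (fun h v => (Finset.univ.filter (fun i => v i ≤ TD)).card < h) (fun h _ => hE h)]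
    apply lintegral_congr_ae
    filter_upwards [hinj] with v hv
    have hC : (Finset.univ.filter (fun i => v i ≤ TD)).card ≤ N := by
      have := Finset.card_filter_le (Finset.univ : Finset (Fin N)) (fun i => v i ≤ TD)
      simpa using this
    rw [countJ hv K TD,
      card_Icc_filter K ((Finset.univ.filter (fun i => v i ≤ TD)).card) N hKN hC]
  -- inclusion-exclusion
  have hie : μ (A ∪ B) + μ (A ∩ B) = μ A + μ B := measure_union_add_inter A hB
  -- pass to reals
  have hfin : ∀ S : Set (Fin N → ℝ), μ S ≠ ⊤ := fun S => measure_ne_top μ S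
  set x : ℝ := (μ (A ∪ B)).toReal with hx
  set j : ℝ := (μ (A ∩ B)).toReal with hj
  set b : ℝ := (μ B).toReal with hb
  have hxj : x + j = Real.exp (-l * (TD - c)) + b := by
    have := congrArg ENNReal.toReal hie
    rw [ENNReal.toReal_add (hfin _) (hfin _), ENNReal.toReal_add (hfin _) (hfin _),
      hA_val, ENNReal.toReal_ofReal (Real.exp_nonneg _)] at this
    exact this
  have hbr : (N : ℝ) * b = (N : ℝ) - K := by
    have := congrArg ENNReal.toReal hB_val
    rw [ENNReal.toReal_mul] at this
    simp only [ENNReal.toReal_natCast] at this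
    rw [← hb] at this
    rw [this, Nat.cast_sub hKN]
  have hjr : (N : ℝ) * j = ∑ h ∈ Finset.Icc (K+1) N, (μ (E h)).toReal := by
    have := congrArg ENNReal.toReal hJ_val
    rw [ENNReal.toReal_mul, ENNReal.toReal_sum (fun h _ => hfin _)] at this
    simp only [ENNReal.toReal_natCast] at this
    rw [← hj] at this
    exact this
  -- final rewriting of the goal
  have hg1 : P {ω | min TD (orderStat T K ω) < T n ω} = μ (A ∪ B) := by
    rw [hev1]; exact key _ (hA.union hB)
  have hsum_eq : ∑ h ∈ Finset.Icc (K + 1) N, (P {ω | TD < orderStat T h ω}).toReal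
      = ∑ h ∈ Finset.Icc (K+1) N, (μ (E h)).toReal := by
    apply Finset.sum_congr rfl
    intro h hh
    rw [hev2 h hh, key _ (hE h)]
  rw [hg1, hsum_eq, ← hx, ← hjr]
  have hNne : (N : ℝ) ≠ 0 := Nat.cast_ne_zero.2 hN.ne'
  have hb' : ((N:ℝ) - (K:ℝ))/(N:ℝ) = b := by
    rw [div_eq_iff hNne]; linear_combination -hbr
  have hj' : (1/(N:ℝ)) * ((N:ℝ)*j) = j := by field_simp
  rw [hj', hb']
  linarith [hxj]
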